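/- Suppose the kernel functions K_1,…,K_n are singular and J is an arbitrary n-field function. Then the difference function Φ : Y → ℝ^n is proper, i.e., the preimage under Φ of every compact subset of ℝ^n is a compact subset of Y; moreover, for every sequence (x_k) in Y converging to a point of the boundary ∂Y of Y in ℝ^n, one has ‖Φ(x_k)‖ → ∞. -/

import Mathlib

open Set Filter
open scoped BigOperators Topology

noncomputable section

/-- The real part of an extended-real-valued function. -/
def toR (K : ℝ → EReal) : ℝ → ℝ := fun t => (K t).toReal

/-- A *kernel function*: finite-valued, continuous and concave on `[-1,0)` and `(0,1]`,
never `+∞`, and with coinciding one-sided limits at `0` (given by the value `K 0`). -/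
structure IsKernel (K : ℝ → EReal) : Prop where
  ne_top : ∀ t, K t ≠ ⊤
  finite_left : ∀ t ∈ Ico (-1:ℝ) 0, K t ≠ ⊥
  finite_right : ∀ t ∈ Ioc (0:ℝ) 1, K t ≠ ⊥
  cont_left : ContinuousOn (toR K) (Ico (-1:ℝ) 0)
  cont_right : ContinuousOn (toR K) (Ioc (0:ℝ) 1)
  concave_left : ConcaveOn ℝ (Ico (-1:ℝ) 0) (toR K)
  concave_right : ConcaveOn ℝ (Ioc (0:ℝ) 1) (toR K)
  tendsto_left : Tendsto K (nhdsWithin 0 (Iio 0)) (nhds (K 0))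
  tendsto_right : Tendsto K (nhdsWithin 0 (Ioi 0)) (nhds (K 0))

/-- Left one-sided derivative. -/
def Dm (f : ℝ → ℝ) (t : ℝ) : ℝ := derivWithin f (Iio t) t

/-- Right one-sided derivative. -/
def Dp (f : ℝ → ℝ) (t : ℝ) : ℝ := derivWithin f (Ioi t) t

/-- Condition (PM_c): periodized `c`-monotonicity. -/
def PMcond (K : ℝ → EReal) (c : ℝ) : Prop :=
  ∀ t ∈ Ioo (0:ℝ) 1, c ≤ Dm (toR K) t - Dm (toR K) (t - 1)

/-- An *n-field function*: bounded above, never `+∞`, finite at more than `n` points of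
`[0,1]`, where the endpoints count with weight `1/2`. -/
structure IsNField (n : ℕ) (J : ℝ → EReal) : Prop where
  ne_top : ∀ t, J t ≠ ⊤
  bdd : ∃ M : ℝ, ∀ t ∈ Icc (0:ℝ) 1, J t ≤ (M : EReal)
  count : (∃ T : Finset ℝ, ↑T ⊆ {t | t ∈ Ioo (0:ℝ) 1 ∧ J t ≠ ⊥} ∧ n + 1 ≤ T.card) ∨
    ((∃ T : Finset ℝ, ↑T ⊆ {t | t ∈ Ioo (0:ℝ) 1 ∧ J t ≠ ⊥} ∧ n ≤ T.card) ∧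
      (J 0 ≠ ⊥ ∨ J 1 ≠ ⊥))

/-- The open simplex `S`. -/
def openSimplex (n : ℕ) : Set (Fin n → ℝ) :=
  {y | StrictMono y ∧ ∀ i, y i ∈ Ioo (0:ℝ) 1}

/-- The closed simplex `S̄`. -/
def closedSimplex (n : ℕ) : Set (Fin n → ℝ) :=
  {y | Monotone y ∧ ∀ i, y i ∈ Icc (0:ℝ) 1}

/-- The left endpoint `y_j` of `I_j(y)`, with the convention `y_0 = 0`. -/
def nodeLo {n : ℕ} (y : Fin n → ℝ) (j : ℕ) : ℝ :=
  if h : 0 < j ∧ j ≤ n then y ⟨j - 1, by omega⟩ else 0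

/-- The right endpoint `y_{j+1}` of `I_j(y)`, with the convention `y_{n+1} = 1`. -/
def nodeHi {n : ℕ} (y : Fin n → ℝ) (j : ℕ) : ℝ :=
  if h : j < n then y ⟨j, h⟩ else 1

/-- The interval `I_j(y) = [y_j, y_{j+1}]`. -/
def Ij {n : ℕ} (y : Fin n → ℝ) (j : ℕ) : Set ℝ := Icc (nodeLo y j) (nodeHi y j)

/-- The sum of translates function `F(y,t) = J(t) + ∑ K_j(t - y_j)`. -/
def SOT {n : ℕ} (K : Fin n → ℝ → EReal) (J : ℝ → EReal) (y : Fin n → ℝ) (t : ℝ) : EReal :=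
  J t + ∑ i, K i (t - y i)

/-- The interval maximum `m_j(y) = sup_{t ∈ I_j(y)} F(y,t)`. -/
def mj {n : ℕ} (K : Fin n → ℝ → EReal) (J : ℝ → EReal) (y : Fin n → ℝ) (j : ℕ) : EReal :=
  ⨆ t ∈ Ij y j, SOT K J y t

/-- The regularity set `Y`. -/
def regSet {n : ℕ} (K : Fin n → ℝ → EReal) (J : ℝ → EReal) : Set (Fin n → ℝ) :=
  {y ∈ openSimplex n | ∀ j ≤ n, mj K J y j ≠ ⊥}

/-- The difference function `Φ(y) = (m_1 - m_0, …, m_n - m_{n-1})`. -/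
def PhiFun {n : ℕ} (K : Fin n → ℝ → EReal) (J : ℝ → EReal) (y : Fin n → ℝ) : Fin n → ℝ :=
  fun i => (mj K J y ((i : ℕ) + 1)).toReal - (mj K J y (i : ℕ)).toReal

/-- A map between (pseudo)metric spaces is *locally bi-Lipschitz* if every point has a
neighborhood on which the map is a bi-Lipschitz homeomorphism onto its image. -/
def LocallyBiLipschitz {α β : Type*} [PseudoMetricSpace α] [PseudoMetricSpace β]
    (f : α → β) : Prop :=
  ∀ x : α, ∃ U ∈ 𝓝 x, ∃ c C : ℝ, 0 < c ∧ ∀ a ∈ U, ∀ b ∈ U,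
    c * dist a b ≤ dist (f a) (f b) ∧ dist (f a) (f b) ≤ C * dist a b

/-- The relative interior of `[a,b] ⊆ [0,1]` in the space `[0,1]`. -/
def relIntIcc (a b : ℝ) : Set ℝ :=
  (if a = 0 then Ici a else Ioi a) ∩ (if b = 1 then Iic b else Iio b)

/-- Condition `(∞₊)`. -/
def CondInfPlus (J : ℝ → EReal) : Prop :=
  J 0 = ⊥ ∧ Tendsto J (nhdsWithin 0 (Ioi 0)) (nhds ⊥)

/-- Condition `(∞₋)`. -/
def CondInfMinus (J : ℝ → EReal) : Prop :=
  J 1 = ⊥ ∧ Tendsto J (nhdsWithin 1 (Iio 1)) (nhds ⊥)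

/-- Fenton's cusp condition `(∞'₊)`. -/
def CuspPlus (J : ℝ → EReal) : Prop :=
  ∀ M : ℝ, ∃ δ > (0:ℝ), ∀ s t : ℝ, 0 ≤ s → s < t → t ≤ δ →
    J s ≠ ⊥ → J t ≠ ⊥ → M ≤ ((J t).toReal - (J s).toReal) / (t - s)

/-- Fenton's cusp condition `(∞'₋)`. -/
def CuspMinus (J : ℝ → EReal) : Prop :=
  ∀ M : ℝ, ∃ δ > (0:ℝ), ∀ t s : ℝ, 1 - δ ≤ t → t < s → s ≤ 1 →
    J s ≠ ⊥ → J t ≠ ⊥ → ((J t).toReal - (J s).toReal) / (t - s) ≤ -M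

/-- `L : [0,1] → [0,∞)` is log-concave:
`L(λs + (1-λ)t) ≥ L(s)^λ L(t)^{1-λ}`. -/
def LogConcaveOn01 (L : ℝ → ℝ) : Prop :=
  ∀ s ∈ Icc (0:ℝ) 1, ∀ t ∈ Icc (0:ℝ) 1, ∀ l ∈ Icc (0:ℝ) 1,
    L s ^ l * L t ^ (1 - l) ≤ L (l * s + (1 - l) * t)

section ProperAux

/-! ### Auxiliary lemmas for Proposition 4.2 -/

private lemma ereal_coe_sum {α : Type*} (s : Finset α) (f : α → ℝ) :
    ((∑ i ∈ s, f i : ℝ) : EReal) = ∑ i ∈ s, (f i : EReal) := by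
  induction s using Finset.cons_induction with
  | empty => simp
  | cons a s ha ih => rw [Finset.sum_cons, Finset.sum_cons, EReal.coe_add, ih]

private lemma nodeLo_zero {n : ℕ} (y : Fin n → ℝ) : nodeLo y 0 = 0 := by simp [nodeLo]

private lemma nodeLo_pos_eq {n : ℕ} (y : Fin n → ℝ) {j : ℕ} (h1 : 0 < j) (h2 : j ≤ n) :
    nodeLo y j = y ⟨j - 1, by omega⟩ := dif_pos ⟨h1, h2⟩

private lemma nodeHi_lt_eq {n : ℕ} (y : Fin n → ℝ) {j : ℕ} (h : j < n) :
    nodeHi y j = y ⟨j, h⟩ := dif_pos h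

private lemma nodeHi_last {n : ℕ} (y : Fin n → ℝ) {j : ℕ} (h : ¬ j < n) :
    nodeHi y j = 1 := dif_neg h

private lemma nodeLo_nonneg {n : ℕ} {y : Fin n → ℝ} (hy : y ∈ closedSimplex n) (j : ℕ) :
    0 ≤ nodeLo y j := by
  unfold nodeLo; split
  · exact (hy.2 _).1
  · exact le_refl 0

private lemma nodeHi_le_one {n : ℕ} {y : Fin n → ℝ} (hy : y ∈ closedSimplex n) (j : ℕ) :
    nodeHi y j ≤ 1 := by
  unfold nodeHi; split
  · exact (hy.2 _).2
  · exact le_refl 1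

private lemma Ij_subset_unit {n : ℕ} {y : Fin n → ℝ} (hy : y ∈ closedSimplex n) {j : ℕ} {t : ℝ}
    (ht : t ∈ Ij y j) : t ∈ Icc (0:ℝ) 1 :=
  ⟨(nodeLo_nonneg hy j).trans ht.1, ht.2.trans (nodeHi_le_one hy j)⟩

private lemma exists_Ij_mem {n : ℕ} {y : Fin n → ℝ} (hy : y ∈ closedSimplex n) {t : ℝ}
    (ht : t ∈ Icc (0:ℝ) 1) : ∃ j ≤ n, t ∈ Ij y j := by
  classical
  set P : ℕ → Prop := fun j => nodeLo y j ≤ t with hPdef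
  have hP0 : P 0 := by simpa [P, nodeLo_zero] using ht.1
  refine ⟨Nat.findGreatest P n, Nat.findGreatest_le n,
    Nat.findGreatest_spec (Nat.zero_le n) hP0, ?_⟩
  by_cases hlt : Nat.findGreatest P n < n
  · by_contra hcon
    push_neg at hcon
    have hnext : ¬ P (Nat.findGreatest P n + 1) :=
      Nat.findGreatest_is_greatest (Nat.lt_succ_self _) (by omega)
    apply hnext
    show nodeLo y (Nat.findGreatest P n + 1) ≤ t
    rw [nodeLo_pos_eq y (Nat.succ_pos _) (by omega)]
    rw [nodeHi_lt_eq y hlt] at hcon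
    exact le_of_lt hcon
  · rw [nodeHi_last y hlt]; exact ht.2

private lemma openSimplex_subset_closed {n : ℕ} : openSimplex n ⊆ closedSimplex n :=
  fun _ hy => ⟨hy.1.monotone, fun i => Ioo_subset_Icc_self (hy.2 i)⟩

private lemma isOpen_openSimplex {n : ℕ} : IsOpen (openSimplex n) := by
  have hset : openSimplex n =
      (⋂ p : Fin n × Fin n, {y : Fin n → ℝ | p.1 < p.2 → y p.1 < y p.2}) ∩
        ⋂ i : Fin n, (fun y : Fin n → ℝ => y i) ⁻¹' Ioo (0:ℝ) 1 := by
    ext y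
    simp only [openSimplex, mem_setOf_eq, mem_inter_iff, mem_iInter, mem_preimage, StrictMono]
    constructor
    · rintro ⟨h1, h2⟩; exact ⟨fun p hp => h1 hp, h2⟩
    · rintro ⟨h1, h2⟩; exact ⟨fun a b hab => h1 (a, b) hab, h2⟩
  rw [hset]
  apply IsOpen.inter
  · apply isOpen_iInter_of_finite
    intro p
    by_cases hp : p.1 < p.2
    · have : {y : Fin n → ℝ | p.1 < p.2 → y p.1 < y p.2} = {y | y p.1 < y p.2} := by
        ext y; simp [hp]
      rw [this]
      exact isOpen_lt (continuous_apply p.1) (continuous_apply p.2)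
    · have : {y : Fin n → ℝ | p.1 < p.2 → y p.1 < y p.2} = univ := by
        ext y; simp [hp]
      rw [this]; exact isOpen_univ
  · exact isOpen_iInter_of_finite fun i => isOpen_Ioo.preimage (continuous_apply i)

private lemma isClosed_closedSimplex {n : ℕ} : IsClosed (closedSimplex n) := by
  have hset : closedSimplex n =
      (⋂ p : Fin n × Fin n, {y : Fin n → ℝ | p.1 ≤ p.2 → y p.1 ≤ y p.2}) ∩
        ⋂ i : Fin n, (fun y : Fin n → ℝ => y i) ⁻¹' Icc (0:ℝ) 1 := by
    ext y
    simp only [closedSimplex, mem_setOf_eq, mem_inter_iff, mem_iInter, mem_preimage, Monotone]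
    constructor
    · rintro ⟨h1, h2⟩; exact ⟨fun p hp => h1 hp, h2⟩
    · rintro ⟨h1, h2⟩; exact ⟨fun a b hab => h1 (a, b) hab, h2⟩
  rw [hset]
  apply IsClosed.inter
  · apply isClosed_iInter
    intro p
    by_cases hp : p.1 ≤ p.2
    · have : {y : Fin n → ℝ | p.1 ≤ p.2 → y p.1 ≤ y p.2} = {y | y p.1 ≤ y p.2} := by
        ext y; simp [hp]
      rw [this]
      exact isClosed_le (continuous_apply p.1) (continuous_apply p.2)
    · have : {y : Fin n → ℝ | p.1 ≤ p.2 → y p.1 ≤ y p.2} = univ := by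
        ext y; simp [hp]
      rw [this]; exact isClosed_univ
  · exact isClosed_iInter fun i => isClosed_Icc.preimage (continuous_apply i)

private lemma kernel_eq_coe {K₀ : ℝ → EReal} (hK : IsKernel K₀) {t : ℝ}
    (ht : t ∈ Icc (-1:ℝ) 1) (h0 : t ≠ 0) : K₀ t = ((toR K₀ t : ℝ) : EReal) := by
  rcases lt_or_gt_of_ne h0 with h | h
  · exact (EReal.coe_toReal (hK.ne_top t) (hK.finite_left t ⟨ht.1, h⟩)).symm
  · exact (EReal.coe_toReal (hK.ne_top t) (hK.finite_right t ⟨h, ht.2⟩)).symm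

private lemma kernel_small {K₀ : ℝ → EReal} (hK : IsKernel K₀) (hs : K₀ 0 = ⊥) (b : ℝ) :
    ∃ δ : ℝ, 0 < δ ∧ δ ≤ 1 ∧ ∀ t : ℝ, |t| ≤ δ → K₀ t ≤ (b : EReal) := by
  have hl : K₀ ⁻¹' (Iio (b:EReal)) ∈ 𝓝[<] (0:ℝ) := by
    have h := hK.tendsto_left; rw [hs] at h
    exact h (Iio_mem_nhds (EReal.bot_lt_coe b))
  have hr : K₀ ⁻¹' (Iio (b:EReal)) ∈ 𝓝[>] (0:ℝ) := by
    have h := hK.tendsto_right; rw [hs] at h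
    exact h (Iio_mem_nhds (EReal.bot_lt_coe b))
  rw [Metric.mem_nhdsWithin_iff] at hl hr
  obtain ⟨ε₁, hε₁, h1⟩ := hl
  obtain ⟨ε₂, hε₂, h2⟩ := hr
  have hX : 0 < min (min ε₁ ε₂) 1 := lt_min (lt_min hε₁ hε₂) one_pos
  refine ⟨min (min ε₁ ε₂) 1 / 2, by positivity, by
    have := min_le_right (min ε₁ ε₂) 1; linarith, ?_⟩
  intro t ht
  rcases lt_trichotomy t 0 with h | h | h
  · have hmem : t ∈ Metric.ball (0:ℝ) ε₁ ∩ Iio 0 := by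
      refine ⟨?_, h⟩
      rw [Metric.mem_ball, Real.dist_eq, sub_zero]
      have h3 := min_le_left (min ε₁ ε₂) 1
      have h4 := min_le_left ε₁ ε₂
      linarith
    exact le_of_lt (h1 hmem)
  · rw [h, hs]; exact bot_le
  · have hmem : t ∈ Metric.ball (0:ℝ) ε₂ ∩ Ioi 0 := by
      refine ⟨?_, h⟩
      rw [Metric.mem_ball, Real.dist_eq, sub_zero]
      have h3 := min_le_left (min ε₁ ε₂) 1
      have h4 := min_le_right ε₁ ε₂
      linarith
    exact le_of_lt (h2 hmem)

private lemma kernel_upper {K₀ : ℝ → EReal} (hK : IsKernel K₀) (hs : K₀ 0 = ⊥) :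
    ∃ s : ℝ, 0 ≤ s ∧ ∀ t ∈ Icc (-1:ℝ) 1, K₀ t ≤ (s : EReal) := by
  obtain ⟨δ, hδ0, hδ1, hδ⟩ := kernel_small hK hs 0
  have hsub1 : Icc (-1:ℝ) (-δ) ⊆ Ico (-1:ℝ) 0 := fun x hx =>
    ⟨hx.1, lt_of_le_of_lt hx.2 (by linarith)⟩
  have hsub2 : Icc (δ:ℝ) 1 ⊆ Ioc (0:ℝ) 1 := fun x hx => ⟨lt_of_lt_of_le hδ0 hx.1, hx.2⟩
  obtain ⟨C₁, hC₁⟩ := isCompact_Icc.exists_bound_of_continuousOn (hK.cont_left.mono hsub1)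
  obtain ⟨C₂, hC₂⟩ := isCompact_Icc.exists_bound_of_continuousOn (hK.cont_right.mono hsub2)
  refine ⟨max (max C₁ C₂) 0, le_max_right _ _, ?_⟩
  intro t ht
  rcases le_or_gt |t| δ with h | h
  · refine (hδ t h).trans ?_
    exact EReal.coe_le_coe_iff.2 (le_max_right _ _)
  · have ht0 : t ≠ 0 := by
      intro h0; rw [h0] at h; simp at h; linarith
    rcases lt_or_gt_of_ne ht0 with hneg | hpos
    · have htm : t ∈ Icc (-1:ℝ) (-δ) := ⟨ht.1, by rw [abs_of_neg hneg] at h; linarith⟩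
      rw [kernel_eq_coe hK ht ht0]
      have h2 := hC₁ t htm
      rw [Real.norm_eq_abs] at h2
      have h3 : toR K₀ t ≤ max (max C₁ C₂) 0 := by
        have := le_abs_self (toR K₀ t)
        have := le_max_left C₁ C₂
        have := le_max_left (max C₁ C₂) 0
        linarith
      exact_mod_cast h3
    · have htm : t ∈ Icc (δ:ℝ) 1 := ⟨by rw [abs_of_pos hpos] at h; linarith, ht.2⟩
      rw [kernel_eq_coe hK ht ht0]
      have h2 := hC₂ t htm
      rw [Real.norm_eq_abs] at h2
      have h3 : toR K₀ t ≤ max (max C₁ C₂) 0 := by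
        have := le_abs_self (toR K₀ t)
        have := le_max_right C₁ C₂
        have := le_max_left (max C₁ C₂) 0
        linarith
      exact_mod_cast h3

private lemma kernel_lower {K₀ : ℝ → EReal} (hK : IsKernel K₀) {δ : ℝ} (hδ0 : 0 < δ)
    (hδ1 : δ ≤ 1) :
    ∃ b : ℝ, ∀ t : ℝ, δ ≤ |t| → |t| ≤ 1 → (b : EReal) ≤ K₀ t := by
  have hsub1 : Icc (-1:ℝ) (-δ) ⊆ Ico (-1:ℝ) 0 := fun x hx =>
    ⟨hx.1, lt_of_le_of_lt hx.2 (by linarith)⟩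
  have hsub2 : Icc (δ:ℝ) 1 ⊆ Ioc (0:ℝ) 1 := fun x hx => ⟨lt_of_lt_of_le hδ0 hx.1, hx.2⟩
  obtain ⟨C₁, hC₁⟩ := isCompact_Icc.exists_bound_of_continuousOn (hK.cont_left.mono hsub1)
  obtain ⟨C₂, hC₂⟩ := isCompact_Icc.exists_bound_of_continuousOn (hK.cont_right.mono hsub2)
  refine ⟨-(max (max C₁ C₂) 0), ?_⟩
  intro t h1 h2
  have ht0 : t ≠ 0 := by
    intro h0; rw [h0] at h1; simp at h1; linarith
  have htI : t ∈ Icc (-1:ℝ) 1 := abs_le.1 h2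
  rcases lt_or_gt_of_ne ht0 with hneg | hpos
  · have htm : t ∈ Icc (-1:ℝ) (-δ) := ⟨htI.1, by rw [abs_of_neg hneg] at h1; linarith⟩
    rw [kernel_eq_coe hK htI ht0]
    have h3 := hC₁ t htm
    rw [Real.norm_eq_abs] at h3
    have h4 : -(max (max C₁ C₂) 0) ≤ toR K₀ t := by
      have := neg_abs_le (toR K₀ t)
      have := le_max_left C₁ C₂
      have := le_max_left (max C₁ C₂) 0
      linarith
    exact_mod_cast h4
  · have htm : t ∈ Icc (δ:ℝ) 1 := ⟨by rw [abs_of_pos hpos] at h1; linarith, htI.2⟩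
    rw [kernel_eq_coe hK htI ht0]
    have h3 := hC₂ t htm
    rw [Real.norm_eq_abs] at h3
    have h4 : -(max (max C₁ C₂) 0) ≤ toR K₀ t := by
      have := neg_abs_le (toR K₀ t)
      have := le_max_right C₁ C₂
      have := le_max_left (max C₁ C₂) 0
      linarith
    exact_mod_cast h4

private lemma kernel_ucont {K₀ : ℝ → EReal} (hK : IsKernel K₀) {δ ε : ℝ} (hδ0 : 0 < δ)
    (hδ1 : δ ≤ 1) (hε : 0 < ε) :
    ∃ η : ℝ, 0 < η ∧ η ≤ δ / 2 ∧ ∀ u v : ℝ, u ∈ Icc (-1:ℝ) 1 → v ∈ Icc (-1:ℝ) 1 →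
      δ ≤ |u| → |u - v| ≤ η → K₀ u ≤ K₀ v + (ε : EReal) := by
  have hsub1 : Icc (-1:ℝ) (-(δ/2)) ⊆ Ico (-1:ℝ) 0 := fun x hx =>
    ⟨hx.1, lt_of_le_of_lt hx.2 (by linarith)⟩
  have hsub2 : Icc (δ/2:ℝ) 1 ⊆ Ioc (0:ℝ) 1 := fun x hx => ⟨by linarith [hx.1], hx.2⟩
  have hA := isCompact_Icc.uniformContinuousOn_of_continuous (hK.cont_left.mono hsub1)
  have hB := isCompact_Icc.uniformContinuousOn_of_continuous (hK.cont_right.mono hsub2)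
  rw [Metric.uniformContinuousOn_iff] at hA hB
  obtain ⟨η₁, hη₁, h1⟩ := hA ε hε
  obtain ⟨η₂, hη₂, h2⟩ := hB ε hε
  have hX : 0 < min (min η₁ η₂) (δ/2) := lt_min (lt_min hη₁ hη₂) (by linarith)
  refine ⟨min (min η₁ η₂) (δ/2) / 2, by positivity, by
    have := min_le_right (min η₁ η₂) (δ/2); linarith, ?_⟩
  intro u v hu hv hδu huv
  have hu0 : u ≠ 0 := by
    intro h0; rw [h0] at hδu; simp at hδu; linarith
  have hη1 : min (min η₁ η₂) (δ/2) / 2 < η₁ := by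
    have := min_le_left (min η₁ η₂) (δ/2)
    have := min_le_left η₁ η₂
    linarith
  have hη2 : min (min η₁ η₂) (δ/2) / 2 < η₂ := by
    have := min_le_left (min η₁ η₂) (δ/2)
    have := min_le_right η₁ η₂
    linarith
  have hηδ : min (min η₁ η₂) (δ/2) / 2 ≤ δ/2 := by
    have := min_le_right (min η₁ η₂) (δ/2); linarith
  rcases lt_or_gt_of_ne hu0 with hneg | hpos
  · have hum : u ∈ Icc (-1:ℝ) (-(δ/2)) := ⟨hu.1, by rw [abs_of_neg hneg] at hδu; linarith⟩
    have hvm : v ∈ Icc (-1:ℝ) (-(δ/2)) := by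
      refine ⟨hv.1, ?_⟩
      have habs := abs_le.1 huv
      rw [abs_of_neg hneg] at hδu
      have := habs.1
      linarith
    have hv0 : v ≠ 0 := by
      intro h0; rw [h0] at hvm; have := hvm.2; linarith
    have hd := h1 u hum v hvm (by rw [Real.dist_eq]; exact lt_of_le_of_lt huv hη1)
    rw [Real.dist_eq] at hd
    rw [kernel_eq_coe hK hu hu0, kernel_eq_coe hK hv hv0, ← EReal.coe_add]
    have := (abs_le.1 hd.le).2
    exact EReal.coe_le_coe_iff.2 (by linarith)
  · have hum : u ∈ Icc (δ/2:ℝ) 1 := ⟨by rw [abs_of_pos hpos] at hδu; linarith, hu.2⟩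
    have hvm : v ∈ Icc (δ/2:ℝ) 1 := by
      refine ⟨?_, hv.2⟩
      have habs := abs_le.1 huv
      rw [abs_of_pos hpos] at hδu
      have := habs.2
      linarith
    have hv0 : v ≠ 0 := by
      intro h0; rw [h0] at hvm; have := hvm.1; linarith
    have hd := h2 u hum v hvm (by rw [Real.dist_eq]; exact lt_of_le_of_lt huv hη2)
    rw [Real.dist_eq] at hd
    rw [kernel_eq_coe hK hu hu0, kernel_eq_coe hK hv hv0, ← EReal.coe_add]
    have := (abs_le.1 hd.le).2
    exact EReal.coe_le_coe_iff.2 (by linarith)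

private lemma exists_pos_forall_fin {n : ℕ} (hn : 1 ≤ n) {P : Fin n → ℝ → Prop}
    (hanti : ∀ i (a b : ℝ), 0 < a → a ≤ b → P i b → P i a)
    (h : ∀ i, ∃ η, 0 < η ∧ P i η) :
    ∃ η, 0 < η ∧ ∀ i, P i η := by
  haveI hne : Nonempty (Fin n) := ⟨⟨0, hn⟩⟩
  choose f hf hP using h
  have hFne : (Finset.univ : Finset (Fin n)).Nonempty := Finset.univ_nonempty
  have hηpos : 0 < Finset.univ.inf' hFne f := by
    rw [Finset.lt_inf'_iff]
    exact fun i _ => hf i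
  exact ⟨Finset.univ.inf' hFne f, hηpos,
    fun i => hanti i _ (f i) hηpos (Finset.inf'_le f (Finset.mem_univ i)) (hP i)⟩

private lemma exists_consts {n : ℕ} {K : Fin n → ℝ → EReal} {J : ℝ → EReal} (hn : 1 ≤ n)
    (hK : ∀ i, IsKernel (K i)) (hsing : ∀ i, K i 0 = ⊥) (hJ : IsNField n J) :
    ∃ M sAbs : ℝ, 0 ≤ sAbs ∧ (∀ t ∈ Icc (0:ℝ) 1, J t ≤ (M:EReal)) ∧
      (∀ i, ∀ u ∈ Icc (-1:ℝ) 1, K i u ≤ (sAbs:EReal)) := by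
  obtain ⟨M, hM⟩ := hJ.bdd
  choose s hs0 hsb using fun i => kernel_upper (hK i) (hsing i)
  haveI : Nonempty (Fin n) := ⟨⟨0, hn⟩⟩
  have hFne : (Finset.univ : Finset (Fin n)).Nonempty := Finset.univ_nonempty
  refine ⟨M, max (Finset.univ.sup' hFne s) 0, le_max_right _ _, hM, ?_⟩
  intro i u hu
  refine (hsb i u hu).trans ?_
  exact EReal.coe_le_coe_iff.2
    ((Finset.le_sup' s (Finset.mem_univ i)).trans (le_max_left _ _))

private lemma SOT_split {n : ℕ} {K : Fin n → ℝ → EReal} {J : ℝ → EReal} {M sAbs : ℝ}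
    (hM : ∀ t ∈ Icc (0:ℝ) 1, J t ≤ (M : EReal))
    (hsb : ∀ i, ∀ u ∈ Icc (-1:ℝ) 1, K i u ≤ (sAbs : EReal)) (hsAbs : 0 ≤ sAbs)
    {y : Fin n → ℝ} (hy : y ∈ closedSimplex n) {t : ℝ} (ht : t ∈ Icc (0:ℝ) 1) (i : Fin n) :
    SOT K J y t ≤ ((M + sAbs * n : ℝ) : EReal) + K i (t - y i) := by
  have harg : ∀ i' : Fin n, t - y i' ∈ Icc (-1:ℝ) 1 := by
    intro i'
    have h1 := (hy.2 i').1; have h2 := (hy.2 i').2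
    exact ⟨by linarith [ht.1], by linarith [ht.2]⟩
  have hsum : ∑ i' ∈ Finset.univ.erase i, K i' (t - y i') ≤ ((sAbs * n : ℝ) : EReal) := by
    have hcard : ((Finset.univ.erase i).card : ℝ) ≤ (n : ℝ) := by
      have := Finset.card_erase_le (s := (Finset.univ : Finset (Fin n))) (a := i)
      have h2 : (Finset.univ : Finset (Fin n)).card = n := by simp
      exact_mod_cast le_trans this (le_of_eq h2)
    calc ∑ i' ∈ Finset.univ.erase i, K i' (t - y i')
        ≤ ∑ _i' ∈ Finset.univ.erase i, ((sAbs:ℝ) : EReal) :=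
          Finset.sum_le_sum fun i' _ => hsb i' _ (harg i')
      _ = (((Finset.univ.erase i).card • sAbs : ℝ) : EReal) := by
          rw [Finset.sum_const, EReal.coe_nsmul]
      _ ≤ ((sAbs * n : ℝ) : EReal) := by
          refine EReal.coe_le_coe_iff.2 ?_
          rw [nsmul_eq_mul]
          calc ((Finset.univ.erase i).card : ℝ) * sAbs ≤ (n:ℝ) * sAbs :=
              mul_le_mul_of_nonneg_right hcard hsAbs
            _ = sAbs * n := mul_comm _ _
  calc SOT K J y t = J t + ∑ i', K i' (t - y i') := rfl
    _ = J t + (K i (t - y i) + ∑ i' ∈ Finset.univ.erase i, K i' (t - y i')) := by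
        rw [← Finset.add_sum_erase _ _ (Finset.mem_univ i)]
    _ ≤ (M:EReal) + (K i (t - y i) + ((sAbs * n : ℝ):EReal)) :=
        add_le_add (hM t ht) (add_le_add le_rfl hsum)
    _ = ((M + sAbs * n : ℝ):EReal) + K i (t - y i) := by
        rw [EReal.coe_add]; abel

private lemma mj_upper {n : ℕ} {K : Fin n → ℝ → EReal} {J : ℝ → EReal} (hn : 1 ≤ n)
    (hK : ∀ i, IsKernel (K i)) (hsing : ∀ i, K i 0 = ⊥) (hJ : IsNField n J) :
    ∃ CU : ℝ, ∀ y ∈ closedSimplex n, ∀ j : ℕ, mj K J y j ≤ (CU : EReal) := by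
  obtain ⟨M, sAbs, hsAbs, hM, hsb⟩ := exists_consts hn hK hsing hJ
  refine ⟨M + sAbs * n + sAbs, ?_⟩
  intro y hy j
  apply iSup₂_le
  intro t ht
  have ht01 := Ij_subset_unit hy ht
  have harg : t - y ⟨0, hn⟩ ∈ Icc (-1:ℝ) 1 := by
    have h1 := (hy.2 ⟨0, hn⟩).1; have h2 := (hy.2 ⟨0, hn⟩).2
    exact ⟨by linarith [ht01.1], by linarith [ht01.2]⟩
  calc SOT K J y t ≤ ((M + sAbs * n:ℝ):EReal) + K ⟨0, hn⟩ (t - y ⟨0, hn⟩) :=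
      SOT_split hM hsb hsAbs hy ht01 _
    _ ≤ ((M + sAbs * n:ℝ):EReal) + ((sAbs:ℝ):EReal) := add_le_add le_rfl (hsb _ _ harg)
    _ = ((M + sAbs * n + sAbs : ℝ):EReal) := by rw [← EReal.coe_add]

private lemma mj_small_of_gap {n : ℕ} {K : Fin n → ℝ → EReal} {J : ℝ → EReal} (hn : 1 ≤ n)
    (hK : ∀ i, IsKernel (K i)) (hsing : ∀ i, K i 0 = ⊥) (hJ : IsNField n J) (b : ℝ) :
    ∃ δ : ℝ, 0 < δ ∧ ∀ y ∈ closedSimplex n, ∀ j ≤ n, nodeHi y j - nodeLo y j ≤ δ →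
      mj K J y j ≤ (b:EReal) := by
  obtain ⟨M, sAbs, hsAbs, hM, hsb⟩ := exists_consts hn hK hsing hJ
  set blow := b - (M + sAbs * n) with hblow
  obtain ⟨δ, hδ0, hδall⟩ := exists_pos_forall_fin hn
    (P := fun i d => ∀ t : ℝ, |t| ≤ d → K i t ≤ (blow:EReal))
    (fun i a b' _ hab hPb t ht => hPb t (ht.trans hab))
    (fun i => by
      obtain ⟨d, h1, _, h3⟩ := kernel_small (hK i) (hsing i) blow
      exact ⟨d, h1, h3⟩)
  refine ⟨δ, hδ0, ?_⟩
  intro y hy j hj hgap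
  apply iSup₂_le
  intro t ht
  have ht01 := Ij_subset_unit hy ht
  have hwit : ∃ i0 : Fin n, |t - y i0| ≤ δ := by
    rcases Nat.eq_zero_or_pos j with rfl | hj1
    · refine ⟨⟨0, hn⟩, ?_⟩
      have hhi : nodeHi y 0 = y ⟨0, hn⟩ := nodeHi_lt_eq y hn
      have hlo : nodeLo y 0 = 0 := nodeLo_zero y
      rw [hhi, hlo] at hgap
      have h1 := ht.1; have h2 := ht.2
      rw [hlo] at h1; rw [hhi] at h2
      rw [abs_le]
      constructor <;> linarith
    · refine ⟨⟨j - 1, by omega⟩, ?_⟩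
      have hlo : nodeLo y j = y ⟨j - 1, by omega⟩ := nodeLo_pos_eq y hj1 hj
      have h1 := ht.1; have h2 := ht.2
      rw [hlo] at h1 hgap
      rw [abs_le]
      constructor <;> [linarith [hδ0]; linarith]
  obtain ⟨i0, hi0⟩ := hwit
  calc SOT K J y t ≤ ((M + sAbs * n:ℝ):EReal) + K i0 (t - y i0) :=
      SOT_split hM hsb hsAbs hy ht01 i0
    _ ≤ ((M + sAbs * n:ℝ):EReal) + ((blow:ℝ):EReal) :=
      add_le_add le_rfl (hδall i0 _ hi0)
    _ = (b:EReal) := by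
      rw [← EReal.coe_add]
      exact congrArg _ (by rw [hblow]; ring)

private lemma mj_compare {n : ℕ} {K : Fin n → ℝ → EReal} {J : ℝ → EReal} (hn : 1 ≤ n)
    (hK : ∀ i, IsKernel (K i)) (hsing : ∀ i, K i 0 = ⊥) (hJ : IsNField n J)
    (B ε : ℝ) (hε : 0 < ε) :
    ∃ η : ℝ, 0 < η ∧ ∀ y y' : Fin n → ℝ, y ∈ closedSimplex n → y' ∈ closedSimplex n →
      (∀ i, |y i - y' i| ≤ η) → ∀ j ≤ n,
      mj K J y j ≤ max (B : EReal) (mj K J y' j + (ε : EReal)) := by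
  obtain ⟨M, sAbs, hsAbs, hM, hsb⟩ := exists_consts hn hK hsing hJ
  set blow := B - (M + sAbs * n) with hblow
  obtain ⟨δ, hδ0, hδall⟩ := exists_pos_forall_fin hn
    (P := fun i d => d ≤ 1 ∧ ∀ t : ℝ, |t| ≤ d → K i t ≤ (blow:EReal))
    (fun i a b' _ hab hPb => ⟨hab.trans hPb.1, fun t ht => hPb.2 t (ht.trans hab)⟩)
    (fun i => by
      obtain ⟨d, h1, h2, h3⟩ := kernel_small (hK i) (hsing i) blow
      exact ⟨d, h1, h2, h3⟩)
  have hδ1 : δ ≤ 1 := (hδall ⟨0, hn⟩).1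
  have hn0 : (0:ℝ) < n := by exact_mod_cast hn
  have hεn : 0 < ε / n := by positivity
  obtain ⟨η, hη0, hηall⟩ := exists_pos_forall_fin hn
    (P := fun i d => d ≤ δ/2 ∧ ∀ u v : ℝ, u ∈ Icc (-1:ℝ) 1 → v ∈ Icc (-1:ℝ) 1 →
      δ ≤ |u| → |u - v| ≤ d → K i u ≤ K i v + ((ε/n : ℝ):EReal))
    (fun i a b' _ hab hPb =>
      ⟨hab.trans hPb.1, fun u v hu hv h1 h2 => hPb.2 u v hu hv h1 (h2.trans hab)⟩)
    (fun i => by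
      obtain ⟨d, h1, h2, h3⟩ := kernel_ucont (hK i) hδ0 hδ1 hεn
      exact ⟨d, h1, h2, h3⟩)
  refine ⟨η, hη0, ?_⟩
  intro y y' hy hy' hclose j hj
  have hη2δ : η ≤ δ/2 := (hηall ⟨0, hn⟩).1
  apply iSup₂_le
  intro t ht
  rcases le_or_gt (SOT K J y t) (B:EReal) with hle | hgt
  · exact hle.trans (le_max_left _ _)
  have ht01 := Ij_subset_unit hy ht
  have harg : ∀ i : Fin n, t - y i ∈ Icc (-1:ℝ) 1 := fun i =>
    ⟨by linarith [(hy.2 i).2, ht01.1], by linarith [(hy.2 i).1, ht01.2]⟩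
  have harg' : ∀ i : Fin n, t - y' i ∈ Icc (-1:ℝ) 1 := fun i =>
    ⟨by linarith [(hy'.2 i).2, ht01.1], by linarith [(hy'.2 i).1, ht01.2]⟩
  have hdist : ∀ i : Fin n, δ < |t - y i| := by
    intro i
    by_contra hcon
    push_neg at hcon
    have hKi := (hδall i).2 _ hcon
    have hle2 : SOT K J y t ≤ (B:EReal) := by
      calc SOT K J y t ≤ ((M + sAbs * n:ℝ):EReal) + K i (t - y i) :=
          SOT_split hM hsb hsAbs hy ht01 i
        _ ≤ ((M + sAbs * n:ℝ):EReal) + ((blow:ℝ):EReal) := add_le_add le_rfl hKi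
        _ = (B:EReal) := by
          rw [← EReal.coe_add]
          exact congrArg _ (by rw [hblow]; ring)
    exact absurd hle2 (not_le.2 hgt)
  have hKcomp : ∀ i : Fin n, K i (t - y i) ≤ K i (t - y' i) + ((ε/n : ℝ):EReal) := by
    intro i
    refine (hηall i).2 _ _ (harg i) (harg' i) (hdist i).le ?_
    have heq : t - y i - (t - y' i) = y' i - y i := by ring
    rw [heq, abs_sub_comm]
    exact hclose i
  have hsum : SOT K J y t ≤ SOT K J y' t + (ε:EReal) := by
    have h1 : ∑ i, K i (t - y i) ≤ ∑ i, (K i (t - y' i) + ((ε/n:ℝ):EReal)) :=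
      Finset.sum_le_sum fun i _ => hKcomp i
    have h2 : ∑ i, (K i (t - y' i) + ((ε/n:ℝ):EReal)) = ∑ i, K i (t - y' i) + (ε:EReal) := by
      rw [Finset.sum_add_distrib, Finset.sum_const, Finset.card_univ, Fintype.card_fin,
        ← EReal.coe_nsmul]
      congr 1
      refine congrArg _ ?_
      rw [nsmul_eq_mul]
      field_simp
    calc SOT K J y t = J t + ∑ i, K i (t - y i) := rfl
      _ ≤ J t + (∑ i, K i (t - y' i) + (ε:EReal)) := add_le_add le_rfl (h1.trans_eq h2)
      _ = (J t + ∑ i, K i (t - y' i)) + (ε:EReal) := (add_assoc _ _ _).symm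
      _ = SOT K J y' t + (ε:EReal) := rfl
  have htI' : t ∈ Ij y' j := by
    constructor
    · by_cases h1 : 0 < j ∧ j ≤ n
      · rw [nodeLo_pos_eq y' h1.1 h1.2]
        have hlo : nodeLo y j = y ⟨j - 1, by omega⟩ := nodeLo_pos_eq y h1.1 h1.2
        have h2 : y ⟨j - 1, by omega⟩ ≤ t := by rw [← hlo]; exact ht.1
        have h3 : δ < t - y ⟨j - 1, by omega⟩ := by
          have h4 := hdist ⟨j - 1, by omega⟩
          rw [abs_of_nonneg (by linarith)] at h4
          exact h4
        have h5 := (abs_le.1 (hclose ⟨j - 1, by omega⟩)).1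
        linarith
      · have hlo' : nodeLo y' j = 0 := by unfold nodeLo; rw [dif_neg h1]
        rw [hlo']
        exact ht01.1
    · by_cases h2 : j < n
      · rw [nodeHi_lt_eq y' h2]
        have hhi : nodeHi y j = y ⟨j, h2⟩ := nodeHi_lt_eq y h2
        have h3 : t ≤ y ⟨j, h2⟩ := by rw [← hhi]; exact ht.2
        have h4 : δ < y ⟨j, h2⟩ - t := by
          have h5 := hdist ⟨j, h2⟩
          rw [abs_of_nonpos (by linarith), neg_sub] at h5
          exact h5
        have h6 := (abs_le.1 (hclose ⟨j, h2⟩)).2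
        linarith
      · rw [nodeHi_last y' h2]
        exact ht01.2
  refine le_max_of_le_right ?_
  calc SOT K J y t ≤ SOT K J y' t + (ε:EReal) := hsum
    _ ≤ mj K J y' j + (ε:EReal) :=
      add_le_add (le_iSup₂_of_le t htI' le_rfl) le_rfl

private lemma exists_mj_lower {n : ℕ} {K : Fin n → ℝ → EReal} {J : ℝ → EReal} (hn : 1 ≤ n)
    (hK : ∀ i, IsKernel (K i)) (hsing : ∀ i, K i 0 = ⊥) (hJ : IsNField n J) :
    ∃ c : ℝ, ∀ y ∈ closedSimplex n, ∃ j ≤ n, (c:EReal) ≤ mj K J y j := by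
  classical
  obtain ⟨T', hT'sub, hT'card⟩ :
      ∃ T' : Finset ℝ, (↑T' ⊆ {t : ℝ | t ∈ Icc (0:ℝ) 1 ∧ J t ≠ ⊥}) ∧ n + 1 ≤ T'.card := by
    rcases hJ.count with ⟨T, hT, hc⟩ | ⟨⟨T, hT, hc⟩, he⟩
    · refine ⟨T, fun t ht => ?_, hc⟩
      have h := hT ht
      exact ⟨⟨h.1.1.le, h.1.2.le⟩, h.2⟩
    · rcases he with h0 | h1
      · refine ⟨insert 0 T, ?_, ?_⟩
        · intro t ht
          rw [Finset.coe_insert, Set.mem_insert_iff] at ht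
          rcases ht with rfl | ht
          · exact ⟨⟨le_refl 0, zero_le_one⟩, h0⟩
          · have h := hT ht
            exact ⟨⟨h.1.1.le, h.1.2.le⟩, h.2⟩
        · rw [Finset.card_insert_of_notMem (fun hmem => by
            have := (hT hmem).1
            exact absurd this.1 (lt_irrefl 0))]
          omega
      · refine ⟨insert 1 T, ?_, ?_⟩
        · intro t ht
          rw [Finset.coe_insert, Set.mem_insert_iff] at ht
          rcases ht with rfl | ht
          · exact ⟨⟨zero_le_one, le_refl 1⟩, h1⟩
          · have h := hT ht
            exact ⟨⟨h.1.1.le, h.1.2.le⟩, h.2⟩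
        · rw [Finset.card_insert_of_notMem (fun hmem => by
            have := (hT hmem).1
            exact absurd this.2 (lt_irrefl 1))]
          omega
  have hT'ne : T'.Nonempty := Finset.card_pos.1 (by omega)
  obtain ⟨a, ha, b, hb, hab⟩ := Finset.one_lt_card.1 (show 1 < T'.card by omega)
  set Pp := (T' ×ˢ T').filter (fun p : ℝ × ℝ => p.1 ≠ p.2) with hPp
  have hPne : Pp.Nonempty :=
    ⟨(a, b), by simp [hPp, Finset.mem_filter, Finset.mem_product, ha, hb, hab]⟩
  set d := Pp.inf' hPne (fun p => |p.1 - p.2|) with hd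
  have hd0 : 0 < d := by
    rw [hd, Finset.lt_inf'_iff]
    intro p hp
    exact abs_pos.2 (sub_ne_zero.2 (Finset.mem_filter.1 hp).2)
  set δ0 := min (d/2) 1 with hδ0def
  have hδ0pos : 0 < δ0 := lt_min (by linarith) one_pos
  have hδ01 : δ0 ≤ 1 := min_le_right _ _
  choose bl hbl using fun i : Fin n => kernel_lower (hK i) hδ0pos hδ01
  set minJ := T'.inf' hT'ne (fun t => (J t).toReal) with hminJ
  refine ⟨minJ + ∑ i, bl i, ?_⟩
  intro y hy
  have hfar : ∃ t0 ∈ T', ∀ i : Fin n, δ0 ≤ |t0 - y i| := by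
    by_contra hcon
    push_neg at hcon
    haveI : Nonempty (Fin n) := ⟨⟨0, hn⟩⟩
    obtain ⟨t1, ht1, t2, ht2, hne12, heq⟩ :=
      Finset.exists_ne_map_eq_of_card_lt_of_maps_to
        (show (Finset.univ : Finset (Fin n)).card < T'.card by
          rw [Finset.card_univ, Fintype.card_fin]; omega)
        (fun t _ => Finset.mem_univ
          (if h : t ∈ T' then Classical.choose (hcon t h) else ⟨0, hn⟩))
    rw [dif_pos ht1, dif_pos ht2] at heq
    have h1 := Classical.choose_spec (hcon t1 ht1)
    have h2 := Classical.choose_spec (hcon t2 ht2)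
    have hd12 : d ≤ |t1 - t2| := by
      have hmem : (t1, t2) ∈ Pp := by
        rw [hPp, Finset.mem_filter, Finset.mem_product]
        exact ⟨⟨ht1, ht2⟩, hne12⟩
      rw [hd]
      exact Finset.inf'_le _ hmem
    have htri : |t1 - t2| ≤ |t1 - y (Classical.choose (hcon t1 ht1))| +
        |y (Classical.choose (hcon t1 ht1)) - t2| := abs_sub_le _ _ _
    have h4 : |y (Classical.choose (hcon t1 ht1)) - t2| = |t2 - y (Classical.choose (hcon t2 ht2))| := by
      rw [heq, abs_sub_comm]
    have hδ0d : 2 * δ0 ≤ d := by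
      rw [hδ0def]
      have := min_le_left (d/2) 1
      linarith
    rw [h4] at htri
    linarith
  obtain ⟨t0, ht0T, ht0far⟩ := hfar
  have ht0mem : t0 ∈ Icc (0:ℝ) 1 ∧ J t0 ≠ ⊥ := hT'sub ht0T
  obtain ⟨j, hj, htj⟩ := exists_Ij_mem hy ht0mem.1
  refine ⟨j, hj, ?_⟩
  have hstep : ((minJ + ∑ i, bl i : ℝ) : EReal) ≤ SOT K J y t0 := by
    have hJt : (minJ : EReal) ≤ J t0 := by
      rw [← EReal.coe_toReal (hJ.ne_top t0) ht0mem.2]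
      exact EReal.coe_le_coe_iff.2 (Finset.inf'_le _ ht0T)
    have hKt : ∀ i : Fin n, ((bl i : ℝ):EReal) ≤ K i (t0 - y i) := by
      intro i
      refine hbl i _ (ht0far i) ?_
      have h1 := (hy.2 i).1; have h2 := (hy.2 i).2
      rw [abs_le]
      exact ⟨by linarith [ht0mem.1.1], by linarith [ht0mem.1.2]⟩
    calc ((minJ + ∑ i, bl i : ℝ) : EReal) = (minJ:EReal) + ((∑ i, bl i : ℝ):EReal) :=
        EReal.coe_add _ _
      _ = (minJ:EReal) + ∑ i, ((bl i:ℝ):EReal) := by rw [ereal_coe_sum]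
      _ ≤ J t0 + ∑ i, K i (t0 - y i) :=
        add_le_add hJt (Finset.sum_le_sum fun i _ => hKt i)
      _ = SOT K J y t0 := rfl
  exact hstep.trans (le_iSup₂_of_le t0 htj le_rfl)

private lemma mj_all_lower {n : ℕ} {K : Fin n → ℝ → EReal} {J : ℝ → EReal} (hn : 1 ≤ n)
    (hK : ∀ i, IsKernel (K i)) (hsing : ∀ i, K i 0 = ⊥) (hJ : IsNField n J)
    (R : ℝ) (hR : 0 ≤ R) :
    ∃ B : ℝ, ∀ y ∈ regSet K J, ‖PhiFun K J y‖ ≤ R → ∀ j ≤ n, (B:EReal) ≤ mj K J y j := by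
  obtain ⟨c, hc⟩ := exists_mj_lower hn hK hsing hJ
  obtain ⟨CU, hCU⟩ := mj_upper hn hK hsing hJ
  refine ⟨c - n * R, ?_⟩
  intro y hyY hnorm j hj
  have hyc : y ∈ closedSimplex n := openSimplex_subset_closed hyY.1
  set r : ℕ → ℝ := fun j => (mj K J y j).toReal with hr
  have hnetop : ∀ j' : ℕ, mj K J y j' ≠ ⊤ := fun j' =>
    ((hCU y hyc j').trans_lt (EReal.coe_lt_top CU)).ne
  have hcoe : ∀ j' ≤ n, mj K J y j' = ((r j' : ℝ):EReal) := fun j' hj' =>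
    (EReal.coe_toReal (hnetop j') (hyY.2 j' hj')).symm
  have hstep : ∀ j' : ℕ, j' < n → |r (j' + 1) - r j'| ≤ R := by
    intro j' hjn
    have h1 : ‖PhiFun K J y ⟨j', hjn⟩‖ ≤ ‖PhiFun K J y‖ := norm_le_pi_norm _ _
    have h2 : PhiFun K J y ⟨j', hjn⟩ = r (j' + 1) - r j' := rfl
    rw [h2, Real.norm_eq_abs] at h1
    linarith
  obtain ⟨j0, hj0, hcj0⟩ := hc y hyc
  have hcr : c ≤ r j0 := by
    rw [hcoe j0 hj0] at hcj0
    exact_mod_cast hcj0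
  have key : ∀ d a : ℕ, a + d ≤ n → |r (a + d) - r a| ≤ d * R := by
    intro d
    induction d with
    | zero => intro a _; simp
    | succ k ih =>
      intro a ha
      have h1 := ih a (by omega)
      have h2 := hstep (a + k) (by omega)
      have h3 := abs_sub_le (r (a + k + 1)) (r (a + k)) (r a)
      have h4 : a + (k + 1) = a + k + 1 := by omega
      rw [h4]
      push_cast
      rw [add_mul, one_mul]
      calc |r (a + k + 1) - r a| ≤ |r (a + k + 1) - r (a + k)| + |r (a + k) - r a| := h3
        _ ≤ R + (k:ℝ) * R := add_le_add h2 h1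
        _ = (k:ℝ) * R + R := add_comm _ _
  have hj0j : |r j - r j0| ≤ (n:ℝ) * R := by
    rcases le_total j j0 with hle | hle
    · have heq : j + (j0 - j) = j0 := by omega
      have := key (j0 - j) j (by omega)
      rw [heq] at this
      rw [abs_sub_comm]
      refine this.trans ?_
      have : ((j0 - j : ℕ):ℝ) ≤ (n:ℝ) := by exact_mod_cast by omega
      exact mul_le_mul_of_nonneg_right this hR
    · have heq : j0 + (j - j0) = j := by omega
      have := key (j - j0) j0 (by omega)
      rw [heq] at this
      refine this.trans ?_
      have : ((j - j0 : ℕ):ℝ) ≤ (n:ℝ) := by exact_mod_cast by omega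
      exact mul_le_mul_of_nonneg_right this hR
  have hfinal : c - n * R ≤ r j := by
    have := (abs_le.1 hj0j).1
    linarith
  rw [hcoe j hj]
  exact_mod_cast hfinal

private lemma tendsto_nodeLo {n : ℕ} {x : ℕ → Fin n → ℝ} {z : Fin n → ℝ}
    (h : Tendsto x atTop (𝓝 z)) (j : ℕ) :
    Tendsto (fun k => nodeLo (x k) j) atTop (𝓝 (nodeLo z j)) := by
  by_cases h1 : 0 < j ∧ j ≤ n
  · simp only [nodeLo, dif_pos h1]
    exact ((continuous_apply _).continuousAt.tendsto).comp h
  · simp only [nodeLo, dif_neg h1]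
    exact tendsto_const_nhds

private lemma tendsto_nodeHi {n : ℕ} {x : ℕ → Fin n → ℝ} {z : Fin n → ℝ}
    (h : Tendsto x atTop (𝓝 z)) (j : ℕ) :
    Tendsto (fun k => nodeHi (x k) j) atTop (𝓝 (nodeHi z j)) := by
  by_cases h1 : j < n
  · simp only [nodeHi, dif_pos h1]
    exact ((continuous_apply _).continuousAt.tendsto).comp h
  · simp only [nodeHi, dif_neg h1]
    exact tendsto_const_nhds

private lemma eventually_close {n : ℕ} {x : ℕ → Fin n → ℝ} {z : Fin n → ℝ}
    (hlim : Tendsto x atTop (𝓝 z)) {η : ℝ} (hη : 0 < η) :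
    ∀ᶠ k in atTop, ∀ i, |x k i - z i| ≤ η := by
  obtain ⟨N, hN⟩ := Metric.tendsto_atTop.1 hlim η hη
  rw [eventually_atTop]
  refine ⟨N, fun k hk i => ?_⟩
  have h1 : dist (x k i) (z i) ≤ dist (x k) z := dist_le_pi_dist _ _ _
  rw [Real.dist_eq] at h1
  exact h1.trans (hN k hk).le

private lemma limit_in_regSet {n : ℕ} {K : Fin n → ℝ → EReal} {J : ℝ → EReal} (hn : 1 ≤ n)
    (hK : ∀ i, IsKernel (K i)) (hsing : ∀ i, K i 0 = ⊥) (hJ : IsNField n J)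
    {x : ℕ → Fin n → ℝ} {z : Fin n → ℝ} {B : ℝ}
    (hx : ∀ k, x k ∈ closedSimplex n) (hlim : Tendsto x atTop (𝓝 z))
    (hbd : ∀ k, ∀ j ≤ n, (B:EReal) ≤ mj K J (x k) j) :
    z ∈ openSimplex n ∧ ∀ j ≤ n, ((B - 1 : ℝ):EReal) ≤ mj K J z j := by
  have hzc : z ∈ closedSimplex n :=
    isClosed_closedSimplex.mem_of_tendsto hlim (Eventually.of_forall hx)
  have hgap : ∀ j ≤ n, 0 < nodeHi z j - nodeLo z j := by
    intro j hj
    by_contra hcon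
    push_neg at hcon
    obtain ⟨δ, hδ, hC⟩ := mj_small_of_gap hn hK hsing hJ (B - 1)
    have htend : Tendsto (fun k => nodeHi (x k) j - nodeLo (x k) j) atTop
        (𝓝 (nodeHi z j - nodeLo z j)) :=
      (tendsto_nodeHi hlim j).sub (tendsto_nodeLo hlim j)
    have hev : ∀ᶠ k in atTop, nodeHi (x k) j - nodeLo (x k) j < δ :=
      htend.eventually_lt_const (by linarith)
    obtain ⟨k, hk⟩ := hev.exists
    have h1 := hC (x k) (hx k) j hj hk.le
    have h2 := hbd k j hj
    have h3 : (B:EReal) ≤ ((B - 1:ℝ):EReal) := h2.trans h1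
    rw [EReal.coe_le_coe_iff] at h3
    linarith
  have hzS : z ∈ openSimplex n := by
    have hmono := hzc.1
    refine ⟨?_, ?_⟩
    · intro a b hab
      have hab' : (a:ℕ) < (b:ℕ) := hab
      have ha1 : (a:ℕ) + 1 < n := by omega
      have hstep : z a < z ⟨(a:ℕ) + 1, ha1⟩ := by
        have hg := hgap ((a:ℕ) + 1) (by omega)
        rw [nodeLo_pos_eq z (Nat.succ_pos _) (by omega), nodeHi_lt_eq z ha1] at hg
        have heta : (⟨(a:ℕ) + 1 - 1, by omega⟩ : Fin n) = a := by
          ext; simp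
        rw [heta] at hg
        linarith
      refine hstep.trans_le (hmono ?_)
      rw [Fin.le_def]
      simpa using hab'
    · intro i
      constructor
      · have hg := hgap 0 (Nat.zero_le n)
        rw [nodeLo_zero, nodeHi_lt_eq z hn] at hg
        have h1 : z ⟨0, hn⟩ ≤ z i := hmono (by rw [Fin.le_def]; simp)
        simp only [sub_zero] at hg
        linarith
      · have hg := hgap n le_rfl
        rw [nodeLo_pos_eq z hn le_rfl, nodeHi_last z (lt_irrefl n)] at hg
        have h1 : z i ≤ z ⟨n - 1, by omega⟩ := hmono (by
          rw [Fin.le_def]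
          simp
          omega)
        linarith
  refine ⟨hzS, ?_⟩
  intro j hj
  obtain ⟨η, hη, hB2⟩ := mj_compare hn hK hsing hJ (B - 2) 1 one_pos
  obtain ⟨k, hk⟩ := (eventually_close hlim hη).exists
  have hcomp := hB2 (x k) z (hx k) hzc hk j hj
  have hBk := hbd k j hj
  have h2 : (B:EReal) ≤ mj K J z j + ((1:ℝ):EReal) := by
    rcases le_max_iff.1 (hBk.trans hcomp) with h | h
    · exfalso
      rw [EReal.coe_le_coe_iff] at h
      linarith
    · exact h
  rcases eq_or_ne (mj K J z j) ⊥ with hb | hb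
  · exfalso
    rw [hb] at h2
    rw [EReal.bot_add] at h2
    exact absurd h2 (by simp)
  · obtain ⟨CU, hCU⟩ := mj_upper hn hK hsing hJ
    have hnetop : mj K J z j ≠ ⊤ :=
      ((hCU z (openSimplex_subset_closed hzS) j).trans_lt (EReal.coe_lt_top CU)).ne
    have hcoe : mj K J z j = (((mj K J z j).toReal : ℝ):EReal) :=
      (EReal.coe_toReal hnetop hb).symm
    rw [hcoe] at h2 ⊢
    rw [← EReal.coe_add, EReal.coe_le_coe_iff] at h2
    rw [EReal.coe_le_coe_iff]
    linarith

private lemma isOpen_regSet {n : ℕ} {K : Fin n → ℝ → EReal} {J : ℝ → EReal} (hn : 1 ≤ n)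
    (hK : ∀ i, IsKernel (K i)) (hsing : ∀ i, K i 0 = ⊥) (hJ : IsNField n J) :
    IsOpen (regSet K J) := by
  obtain ⟨CU, hCU⟩ := mj_upper hn hK hsing hJ
  rw [Metric.isOpen_iff]
  intro y hy
  have hyc : y ∈ closedSimplex n := openSimplex_subset_closed hy.1
  have hnetop : ∀ j : ℕ, mj K J y j ≠ ⊤ := fun j =>
    ((hCU y hyc j).trans_lt (EReal.coe_lt_top CU)).ne
  have hcoe : ∀ j ≤ n, mj K J y j = (((mj K J y j).toReal : ℝ):EReal) := fun j hj =>
    (EReal.coe_toReal (hnetop j) (hy.2 j hj)).symm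
  have hrange : (Finset.range (n + 1)).Nonempty := ⟨0, by simp⟩
  set β := (Finset.range (n + 1)).inf' hrange (fun j => (mj K J y j).toReal) with hβ
  obtain ⟨η, hη, hcomp⟩ := mj_compare hn hK hsing hJ (β - 1) 1 one_pos
  obtain ⟨ρ, hρ, hρsub⟩ := Metric.isOpen_iff.1 isOpen_openSimplex y hy.1
  refine ⟨min η ρ, lt_min hη hρ, ?_⟩
  intro y' hy'
  have hy'S : y' ∈ openSimplex n := hρsub (by
    exact lt_of_lt_of_le (Metric.mem_ball.1 hy') (min_le_right _ _))
  refine ⟨hy'S, ?_⟩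
  intro j hj hbot
  have hclose : ∀ i, |y i - y' i| ≤ η := by
    intro i
    have h1 : dist (y' i) (y i) ≤ dist y' y := dist_le_pi_dist _ _ _
    have h2 : dist y' y < min η ρ := Metric.mem_ball.1 hy'
    rw [Real.dist_eq] at h1
    rw [abs_sub_comm]
    linarith [min_le_left η ρ]
  have hcmp := hcomp y y' hyc (openSimplex_subset_closed hy'S) hclose j hj
  rw [hbot, EReal.bot_add] at hcmp
  have hmax : max ((β - 1 : ℝ):EReal) (⊥:EReal) = ((β - 1 : ℝ):EReal) := max_eq_left bot_le
  rw [hmax, hcoe j hj, EReal.coe_le_coe_iff] at hcmp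
  have hβle : β ≤ (mj K J y j).toReal := by
    rw [hβ]
    exact Finset.inf'_le _ (by simp; omega)
  linarith

private lemma mj_continuity {n : ℕ} {K : Fin n → ℝ → EReal} {J : ℝ → EReal} (hn : 1 ≤ n)
    (hK : ∀ i, IsKernel (K i)) (hsing : ∀ i, K i 0 = ⊥) (hJ : IsNField n J)
    {z : Fin n → ℝ} (hz : z ∈ regSet K J) {ε : ℝ} (hε : 0 < ε) :
    ∃ η : ℝ, 0 < η ∧ ∀ y' ∈ closedSimplex n, (∀ i, |y' i - z i| ≤ η) →
      ∀ j ≤ n, |(mj K J y' j).toReal - (mj K J z j).toReal| ≤ ε := by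
  obtain ⟨CU, hCU⟩ := mj_upper hn hK hsing hJ
  have hzc : z ∈ closedSimplex n := openSimplex_subset_closed hz.1
  have hnetop : ∀ (y : Fin n → ℝ), y ∈ closedSimplex n → ∀ j : ℕ, mj K J y j ≠ ⊤ :=
    fun y hy j => ((hCU y hy j).trans_lt (EReal.coe_lt_top CU)).ne
  have hcoez : ∀ j ≤ n, mj K J z j = (((mj K J z j).toReal : ℝ):EReal) := fun j hj =>
    (EReal.coe_toReal (hnetop z hzc j) (hz.2 j hj)).symm
  have hrange : (Finset.range (n + 1)).Nonempty := ⟨0, by simp⟩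
  set β := (Finset.range (n + 1)).inf' hrange (fun j => (mj K J z j).toReal) with hβ
  obtain ⟨η, hη, hcomp⟩ := mj_compare hn hK hsing hJ (β - ε - 1) ε hε
  refine ⟨η, hη, ?_⟩
  intro y' hy' hclose j hj
  have hβle : β ≤ (mj K J z j).toReal := by
    rw [hβ]
    exact Finset.inf'_le _ (by simp; omega)
  have h1 := hcomp z y' hzc hy' (fun i => by rw [abs_sub_comm]; exact hclose i) j hj
  have h2 := hcomp y' z hy' hzc hclose j hj
  -- from h1 : mj z ≤ max (β-ε-1) (mj y' + ε)
  have h1' : (((mj K J z j).toReal : ℝ):EReal) ≤ mj K J y' j + (ε:EReal) := by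
    rw [hcoez j hj] at h1
    rcases le_max_iff.1 h1 with h | h
    · exfalso
      rw [EReal.coe_le_coe_iff] at h
      linarith
    · exact h
  have hy'ne : mj K J y' j ≠ ⊥ := by
    intro hb
    rw [hb, EReal.bot_add] at h1'
    exact absurd h1' (by simp)
  have hcoey' : mj K J y' j = (((mj K J y' j).toReal : ℝ):EReal) :=
    (EReal.coe_toReal (hnetop y' hy' j) hy'ne).symm
  rw [hcoey', ← EReal.coe_add, EReal.coe_le_coe_iff] at h1'
  have h2' : (mj K J y' j).toReal ≤ (mj K J z j).toReal + ε := by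
    rw [hcoey', hcoez j hj] at h2
    rcases le_max_iff.1 h2 with h | h
    · rw [EReal.coe_le_coe_iff] at h
      linarith
    · rw [← EReal.coe_add, EReal.coe_le_coe_iff] at h
      exact h
  rw [abs_le]
  exact ⟨by linarith, by linarith⟩

end ProperAux

/-- (Proposition 4.2 / `prop:proper`.) For singular kernels and an
arbitrary `n`-field function, the difference function `Φ : Y → ℝ^n` is proper, and
`‖Φ(x_k)‖ → ∞` along any sequence in `Y` converging to a boundary point of `Y`. -/
theorem difference_function_proper
    {n : ℕ} (hn : 1 ≤ n) (K : Fin n → ℝ → EReal) (J : ℝ → EReal)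
    (hK : ∀ i, IsKernel (K i)) (hsing : ∀ i, K i 0 = ⊥) (hJ : IsNField n J) :
    (∀ Q : Set (Fin n → ℝ), IsCompact Q →
        IsCompact {y ∈ regSet K J | PhiFun K J y ∈ Q}) ∧
    (∀ (x : ℕ → Fin n → ℝ) (y : Fin n → ℝ),
        (∀ k, x k ∈ regSet K J) → y ∈ frontier (regSet K J) →
        Tendsto x atTop (𝓝 y) →
        Tendsto (fun k => ‖PhiFun K J (x k)‖) atTop atTop) := by
  constructor
  · intro Q hQ
    obtain ⟨R0, hR0⟩ := isBounded_iff_forall_norm_le.1 hQ.isBounded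
    obtain ⟨B, hB⟩ := mj_all_lower hn hK hsing hJ (max R0 0) (le_max_right _ _)
    have hAb : ∀ y : Fin n → ℝ, y ∈ regSet K J ∧ PhiFun K J y ∈ Q →
        ∀ j ≤ n, (B:EReal) ≤ mj K J y j :=
      fun y hy => hB y hy.1 ((hR0 _ hy.2).trans (le_max_left _ _))
    apply (isCompact_univ_pi fun _ : Fin n =>
      isCompact_Icc (a := (0:ℝ)) (b := 1)).of_isClosed_subset
    · apply IsSeqClosed.isClosed
      intro u z hu hulim
      have huc : ∀ k, u k ∈ closedSimplex n := fun k => openSimplex_subset_closed (hu k).1.1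
      have hubd : ∀ k, ∀ j ≤ n, (B:EReal) ≤ mj K J (u k) j := fun k => hAb _ (hu k)
      obtain ⟨hzS, hzmj⟩ := limit_in_regSet hn hK hsing hJ huc hulim hubd
      have hzY : z ∈ regSet K J := by
        refine ⟨hzS, fun j hj hbot => ?_⟩
        have h := hzmj j hj
        rw [hbot] at h
        exact EReal.coe_ne_bot _ (le_bot_iff.1 h)
      refine ⟨hzY, ?_⟩
      have hPhi : Tendsto (fun k => PhiFun K J (u k)) atTop (𝓝 (PhiFun K J z)) := by
        rw [tendsto_pi_nhds]
        intro i
        rw [Metric.tendsto_atTop]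
        intro ε hε
        obtain ⟨η, hη, hcont⟩ := mj_continuity hn hK hsing hJ hzY (show (0:ℝ) < ε/4 by linarith)
        obtain ⟨N, hN⟩ := Metric.tendsto_atTop.1 hulim η hη
        refine ⟨N, fun k hk => ?_⟩
        have hcl : ∀ i', |u k i' - z i'| ≤ η := by
          intro i'
          have h1 : dist (u k i') (z i') ≤ dist (u k) z := dist_le_pi_dist _ _ _
          rw [Real.dist_eq] at h1
          exact h1.trans (hN k hk).le
        have h1 := hcont (u k) (huc k) hcl ((i:ℕ) + 1) (by have := i.isLt; omega)
        have h2 := hcont (u k) (huc k) hcl (i:ℕ) (le_of_lt i.isLt)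
        have e1 := abs_le.1 h1
        have e2 := abs_le.1 h2
        rw [Real.dist_eq]
        show |((mj K J (u k) ((i:ℕ)+1)).toReal - (mj K J (u k) (i:ℕ)).toReal) -
          ((mj K J z ((i:ℕ)+1)).toReal - (mj K J z (i:ℕ)).toReal)| < ε
        rw [abs_lt]
        constructor <;> [linarith [e1.1, e2.2]; linarith [e1.2, e2.1]]
      exact hQ.isClosed.mem_of_tendsto hPhi (Eventually.of_forall fun k => (hu k).2)
    · intro y hy
      rw [Set.mem_univ_pi]
      intro i
      exact Ioo_subset_Icc_self (hy.1.1.2 i)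
  · intro x y hx hy hlim
    rw [Filter.tendsto_atTop]
    by_contra hcon
    push_neg at hcon
    obtain ⟨R, hR⟩ := hcon
    simp only [← not_le] at hR
    obtain ⟨φ, hφ, hφR⟩ :=
      Filter.extraction_of_frequently_atTop (hR.mono fun k h => not_le.1 h)
    obtain ⟨B, hB⟩ := mj_all_lower hn hK hsing hJ (max R 0) (le_max_right _ _)
    have hsub : Tendsto (fun k => x (φ k)) atTop (𝓝 y) := hlim.comp hφ.tendsto_atTop
    have hxc : ∀ k, x (φ k) ∈ closedSimplex n := fun k => openSimplex_subset_closed (hx _).1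
    have hbd : ∀ k, ∀ j ≤ n, (B:EReal) ≤ mj K J (x (φ k)) j := fun k =>
      hB _ (hx _) ((hφR k).le.trans (le_max_left _ _))
    obtain ⟨hyS, hymj⟩ := limit_in_regSet hn hK hsing hJ hxc hsub hbd
    have hyY : y ∈ regSet K J := by
      refine ⟨hyS, fun j hj hbot => ?_⟩
      have h := hymj j hj
      rw [hbot] at h
      exact EReal.coe_ne_bot _ (le_bot_iff.1 h)
    rw [(isOpen_regSet hn hK hsing hJ).frontier_eq] at hy
    exact hy.2 hyY

end
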